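/- For every real number ξ₀ and all complex numbers a, b, the circle integral (1/(2πi)) ∮_{|η−i|=1/2} (a + η·b) / ((1+η²)² · (ξ₀ − η)) dη equals −((i·ξ₀ + 2)·a + i·b) / (4·(ξ₀ − i)²). (This scalar identity is the paper's computation (3.27) of the Boutet de Monvel projection π⁺_{ξₙ}[c(ξ)/|ξ|⁴] on the unit cosphere, with a and b playing the roles of c(ξ') and c(dxₙ).) -/

import Mathlib

open Complex

/-- the contour-integral computation (3.27) of the paper. -/
theorem stmt7 (ξ₀ : ℝ) (a b : ℂ) :
    (1 / (2 * (Real.pi : ℂ) * I)) *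
        (∮ η in C(I, 1/2), (a + η * b) / ((1 + η ^ 2) ^ 2 * ((ξ₀ : ℂ) - η))) =
      -((I * (ξ₀ : ℂ) + 2) * a + I * b) / (4 * ((ξ₀ : ℂ) - I) ^ 2) := by
  have hξI : (1 : ℝ) ≤ ‖(ξ₀ : ℂ) - I‖ := by
    have h : ‖(ξ₀ : ℂ) - I‖ ^ 2 = ξ₀ ^ 2 + 1 := by
      rw [Complex.sq_norm, Complex.normSq_apply]
      simp
      ring
    nlinarith [norm_nonneg ((ξ₀ : ℂ) - I)]
  set f : ℂ → ℂ := fun η => (a + η * b) / ((η + I) ^ 2 * ((ξ₀ : ℂ) - η)) with hfdef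
  set U : Set ℂ := {(-I : ℂ), ((ξ₀ : ℂ))}ᶜ with hUdef
  have hU : IsOpen U := ((Set.finite_singleton _).insert _).isClosed.isOpen_compl
  have hmemU : ∀ z : ℂ, z ∈ U → z + I ≠ 0 ∧ (ξ₀ : ℂ) - z ≠ 0 := by
    intro z hz
    simp only [hUdef, Set.mem_compl_iff, Set.mem_insert_iff, Set.mem_singleton_iff,
      not_or] at hz
    constructor
    · intro h; exact hz.1 (by linear_combination h)
    · intro h; exact hz.2 (by linear_combination -h)
  have hdiff : DifferentiableOn ℂ f U := by
    intro z hz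
    obtain ⟨h1, h2⟩ := hmemU z hz
    exact ((differentiableAt_const a |>.add ((differentiableAt_fun_id).mul
      (differentiableAt_const b))).div
      ((((differentiableAt_fun_id).add (differentiableAt_const I)).pow 2).mul
        ((differentiableAt_const _).sub differentiableAt_fun_id))
      (mul_ne_zero (pow_ne_zero 2 h1) h2)).differentiableWithinAt
  have hsub : Metric.closedBall I (1/2) ⊆ U := by
    intro z hz
    simp only [Metric.mem_closedBall, Complex.dist_eq] at hz
    simp only [hUdef, Set.mem_compl_iff, Set.mem_insert_iff, Set.mem_singleton_iff, not_or]
    have hzI : ‖z - I‖ ≤ 1/2 := hz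
    constructor
    · intro h
      rw [h] at hzI
      have : ‖(-I : ℂ) - I‖ = 2 := by
        have : (-I : ℂ) - I = -(2 * I) := by ring
        rw [this]; simp
      linarith [this ▸ hzI]
    · intro h
      rw [h] at hzI
      have h2 : ‖(ξ₀ : ℂ) - I‖ ≤ 1/2 := hzI
      linarith
  have hmem : I ∈ Metric.ball I (1/2) := Metric.mem_ball_self (by norm_num)
  have key := Complex.two_pi_I_inv_smul_circleIntegral_sub_sq_inv_smul_of_differentiable
    hU hsub hdiff hmem
  have hcongr : (∮ η in C(I, 1/2), (a + η * b) / ((1 + η ^ 2) ^ 2 * ((ξ₀ : ℂ) - η)))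
      = ∮ z in C(I, 1/2), ((z - I) ^ 2)⁻¹ • f z := by
    congr 1
    funext z
    have h1 : (1 + z ^ 2) ^ 2 = (z - I) ^ 2 * (z + I) ^ 2 := by
      linear_combination (1 + 2*z^2 - I^2) * Complex.I_sq
    rw [h1, hfdef]
    simp only [smul_eq_mul, div_eq_mul_inv, mul_inv]
    ring
  rw [hcongr]
  have hsmul : (1 / (2 * (Real.pi : ℂ) * I)) *
      (∮ z in C(I, 1/2), ((z - I) ^ 2)⁻¹ • f z)
      = (2 * (Real.pi : ℂ) * I)⁻¹ • ∮ z in C(I, 1/2), ((z - I) ^ 2)⁻¹ • f z := by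
    rw [smul_eq_mul, one_div]
  rw [hsmul, key]
  -- now compute deriv f I
  have hg : HasDerivAt (fun η : ℂ => a + η * b) b I := by
    simpa using ((hasDerivAt_id I).mul_const b).const_add a
  have hden : HasDerivAt (fun η : ℂ => (η + I) ^ 2 * ((ξ₀ : ℂ) - η))
      (2 * (I + I) * ((ξ₀ : ℂ) - I) + (I + I) ^ 2 * (-1)) I := by
    have h1 : HasDerivAt (fun η : ℂ => (η + I) ^ 2) (2 * (I + I)) I := by
      simpa using ((hasDerivAt_id I).add_const I).fun_pow 2
    have h2 : HasDerivAt (fun η : ℂ => (ξ₀ : ℂ) - η) (-1) I := by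
      simpa using (hasDerivAt_id I).const_sub ((ξ₀ : ℂ))
    simpa [mul_comm] using h1.fun_mul h2
  have hξne : (ξ₀ : ℂ) - I ≠ 0 := by
    intro h
    have := hξI
    rw [h] at this
    simp at this
    linarith
  have hIIne : (I + I : ℂ) ≠ 0 := by
    intro h
    simpa using congrArg Complex.im h
  have hne : ((I : ℂ) + I) ^ 2 * ((ξ₀ : ℂ) - I) ≠ 0 :=
    mul_ne_zero (pow_ne_zero 2 hIIne) hξne
  have hd := (hg.fun_div hden hne).deriv
  simp only [hfdef]
  rw [hd]
  rw [div_eq_div_iff (pow_ne_zero 2 hne)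
    (mul_ne_zero (by norm_num : (4:ℂ) ≠ 0) (pow_ne_zero 2 hξne))]
  linear_combination (16 * ((ξ₀ : ℂ) - I) ^ 2 *
    (a * ξ₀ * I ^ 3 - a * ξ₀ * I + 2 * a * I ^ 2 + b * I ^ 3)) * Complex.I_sq
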